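/- Let M : [0,T] → ℝ^{N×N} be continuously differentiable with M(t) symmetric positive definite for all t, and suppose there exists μ > 0 such that w^T M'(t) z ≤ μ ‖w‖_{M(t)} ‖z‖_{M(t)} for all w, z ∈ ℝ^N and t ∈ [0,T], where ‖w‖_{M(t)}² = w^T M(t) w. Then for all 0 ≤ t ≤ s ≤ T and all w, z ∈ ℝ^N, w^T (M(s) − M(t)) z ≤ (e^{μ(s−t)} − 1) ‖w‖_{M(t)} ‖z‖_{M(t)}. -/

import Mathlib

open Matrix

private lemma bilin_hasDerivAt {N : ℕ} (M M' : ℝ → Matrix (Fin N) (Fin N) ℝ)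
    (w z : Fin N → ℝ) (r : ℝ)
    (h : ∀ i j : Fin N, HasDerivAt (fun s => M s i j) (M' r i j) r) :
    HasDerivAt (fun s => w ⬝ᵥ (M s).mulVec z) (w ⬝ᵥ (M' r).mulVec z) r := by
  simp only [Matrix.mulVec, dotProduct]
  exact HasDerivAt.fun_sum fun i _ =>
    ((HasDerivAt.fun_sum fun j _ => (h i j).mul_const (z j)).const_mul (w i))

private lemma bilin_contOn {N : ℕ} (A : ℝ → Matrix (Fin N) (Fin N) ℝ)
    (w z : Fin N → ℝ) (S : Set ℝ)
    (h : ∀ i j : Fin N, ContinuousOn (fun s => A s i j) S) :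
    ContinuousOn (fun s => w ⬝ᵥ (A s).mulVec z) S := by
  simp only [Matrix.mulVec, dotProduct]
  exact continuousOn_finset_sum _ fun i _ => continuousOn_const.mul
    (continuousOn_finset_sum _ fun j _ => (h i j).mul continuousOn_const)

theorem stmt_5 {N : ℕ} (T : ℝ) (hT : 0 ≤ T)
    (M M' : ℝ → Matrix (Fin N) (Fin N) ℝ)
    (hderiv : ∀ t ∈ Set.Icc (0 : ℝ) T, ∀ i j : Fin N,
      HasDerivAt (fun s => M s i j) (M' t i j) t)
    (hcont : ∀ i j : Fin N, ContinuousOn (fun s => M' s i j) (Set.Icc 0 T))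
    (hsymm : ∀ t ∈ Set.Icc (0 : ℝ) T, (M t).IsSymm)
    (hpos : ∀ t ∈ Set.Icc (0 : ℝ) T, (M t).PosDef)
    (μ : ℝ) (hμ : 0 < μ)
    (hbound : ∀ t ∈ Set.Icc (0 : ℝ) T, ∀ w z : Fin N → ℝ,
      w ⬝ᵥ (M' t).mulVec z ≤
        μ * Real.sqrt (w ⬝ᵥ (M t).mulVec w) * Real.sqrt (z ⬝ᵥ (M t).mulVec z)) :
    ∀ t ∈ Set.Icc (0 : ℝ) T, ∀ s ∈ Set.Icc t T, ∀ w z : Fin N → ℝ,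
      w ⬝ᵥ ((M s - M t).mulVec z) ≤
        (Real.exp (μ * (s - t)) - 1) *
          Real.sqrt (w ⬝ᵥ (M t).mulVec w) * Real.sqrt (z ⬝ᵥ (M t).mulVec z) := by
  intro t ht s hs w z
  obtain ⟨ht0, htT⟩ := ht
  obtain ⟨hts, hsT⟩ := hs
  have hsub : Set.Icc t s ⊆ Set.Icc (0 : ℝ) T := fun r hr =>
    ⟨le_trans ht0 hr.1, le_trans hr.2 hsT⟩
  -- nonnegativity of the quadratic form
  have hnn : ∀ r ∈ Set.Icc (0 : ℝ) T, ∀ v : Fin N → ℝ,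
      0 ≤ v ⬝ᵥ (M r).mulVec v := by
    intro r hr v
    have := (hpos r hr).posSemidef.dotProduct_mulVec_nonneg v
    simpa using this
  -- Gronwall step: quadratic form growth
  have key : ∀ v : Fin N → ℝ, ∀ r ∈ Set.Icc t s,
      v ⬝ᵥ (M r).mulVec v ≤ (v ⬝ᵥ (M t).mulVec v) * Real.exp (μ * (r - t)) := by
    intro v r hr
    set F : ℝ → ℝ := fun r => (v ⬝ᵥ (M r).mulVec v) * Real.exp (-μ * r) with hF
    have hFd : ∀ x ∈ Set.Icc (0 : ℝ) T, HasDerivAt F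
        ((v ⬝ᵥ (M' x).mulVec v) * Real.exp (-μ * x)
          + (v ⬝ᵥ (M x).mulVec v) * (Real.exp (-μ * x) * (-μ))) x := by
      intro x hx
      have h1 := bilin_hasDerivAt M M' v v x (hderiv x hx)
      have h0 : HasDerivAt (fun y : ℝ => -μ * y) (-μ) x := by
        simpa using (hasDerivAt_id x).const_mul (-μ)
      have h2 : HasDerivAt (fun y => Real.exp (-μ * y)) (Real.exp (-μ * x) * (-μ)) x :=
        h0.exp
      exact h1.mul h2
    have hanti : AntitoneOn F (Set.Icc t s) := by
      apply antitoneOn_of_deriv_nonpos (convex_Icc t s)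
      · intro x hx
        exact ((hFd x (hsub hx)).continuousAt).continuousWithinAt
      · intro x hx
        rw [interior_Icc] at hx
        exact ((hFd x (hsub (Set.mem_Icc_of_Ioo hx))).differentiableAt).differentiableWithinAt
      · intro x hx
        rw [interior_Icc] at hx
        have hx' := hsub (Set.mem_Icc_of_Ioo hx)
        rw [(hFd x hx').deriv]
        have hb := hbound x hx' v v
        have hfx := hnn x hx' v
        have : v ⬝ᵥ (M' x).mulVec v ≤ μ * (v ⬝ᵥ (M x).mulVec v) := by
          calc v ⬝ᵥ (M' x).mulVec v ≤ μ * Real.sqrt (v ⬝ᵥ (M x).mulVec v)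
              * Real.sqrt (v ⬝ᵥ (M x).mulVec v) := hb
            _ = μ * (v ⬝ᵥ (M x).mulVec v) := by
              rw [mul_assoc, Real.mul_self_sqrt hfx]
        nlinarith [Real.exp_pos (-μ * x)]
    have hF' := hanti ⟨le_refl t, hts⟩ hr hr.1
    have hep := Real.exp_pos (μ * r)
    have := mul_le_mul_of_nonneg_right hF' hep.le
    calc v ⬝ᵥ (M r).mulVec v
        = F r * Real.exp (μ * r) := by
          rw [hF]; rw [mul_assoc, ← Real.exp_add]; ring_nf; simp
      _ ≤ F t * Real.exp (μ * r) := this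
      _ = (v ⬝ᵥ (M t).mulVec v) * Real.exp (μ * (r - t)) := by
          rw [hF]; rw [mul_assoc, ← Real.exp_add]; ring_nf
  -- sqrt bound
  have sqrt_key : ∀ v : Fin N → ℝ, ∀ r ∈ Set.Icc t s,
      Real.sqrt (v ⬝ᵥ (M r).mulVec v) ≤
        Real.sqrt (v ⬝ᵥ (M t).mulVec v) * Real.exp (μ * (r - t) / 2) := by
    intro v r hr
    have h1 := Real.sqrt_le_sqrt (key v r hr)
    calc Real.sqrt (v ⬝ᵥ (M r).mulVec v)
        ≤ Real.sqrt ((v ⬝ᵥ (M t).mulVec v) * Real.exp (μ * (r - t))) := h1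
      _ = Real.sqrt (v ⬝ᵥ (M t).mulVec v) * Real.sqrt (Real.exp (μ * (r - t))) := by
          rw [Real.sqrt_mul (hnn t ⟨ht0, htT⟩ v)]
      _ = Real.sqrt (v ⬝ᵥ (M t).mulVec v) * Real.exp (μ * (r - t) / 2) := by
          congr 1
          have he : Real.exp (μ * (r - t)) =
              Real.exp (μ * (r - t) / 2) * Real.exp (μ * (r - t) / 2) := by
            rw [← Real.exp_add]; ring_nf
          rw [he]
          exact Real.sqrt_mul_self (Real.exp_pos _).le
  set C := Real.sqrt (w ⬝ᵥ (M t).mulVec w) * Real.sqrt (z ⬝ᵥ (M t).mulVec z) with hC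
  have hCnn : 0 ≤ C := mul_nonneg (Real.sqrt_nonneg _) (Real.sqrt_nonneg _)
  -- integrand bound
  have hib : ∀ r ∈ Set.Icc t s,
      w ⬝ᵥ (M' r).mulVec z ≤ C * (Real.exp (μ * (r - t)) * μ) := by
    intro r hr
    have hr' := hsub hr
    have h1 := hbound r hr' w z
    have h2 := sqrt_key w r hr
    have h3 := sqrt_key z r hr
    have hsw := Real.sqrt_nonneg (w ⬝ᵥ (M r).mulVec w)
    have hsz := Real.sqrt_nonneg (z ⬝ᵥ (M r).mulVec z)
    have hstw := Real.sqrt_nonneg (w ⬝ᵥ (M t).mulVec w)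
    have hep := (Real.exp_pos (μ * (r - t) / 2)).le
    calc w ⬝ᵥ (M' r).mulVec z ≤ μ * Real.sqrt (w ⬝ᵥ (M r).mulVec w)
        * Real.sqrt (z ⬝ᵥ (M r).mulVec z) := h1
      _ ≤ μ * (Real.sqrt (w ⬝ᵥ (M t).mulVec w) * Real.exp (μ * (r - t) / 2))
          * (Real.sqrt (z ⬝ᵥ (M t).mulVec z) * Real.exp (μ * (r - t) / 2)) := by
          apply mul_le_mul
          · exact mul_le_mul_of_nonneg_left h2 hμ.le
          · exact h3
          · exact hsz
          · positivity
      _ = C * (Real.exp (μ * (r - t)) * μ) := by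
          rw [hC, show μ * (r - t) = μ * (r - t) / 2 + μ * (r - t) / 2 by ring,
            Real.exp_add]
          ring
  -- the two integrals
  have huIcc : Set.uIcc t s = Set.Icc t s := Set.uIcc_of_le hts
  have hint1 : IntervalIntegrable (fun r => w ⬝ᵥ (M' r).mulVec z) MeasureTheory.volume t s := by
    apply ContinuousOn.intervalIntegrable
    rw [huIcc]
    exact bilin_contOn M' w z _ fun i j => (hcont i j).mono hsub
  have hint2 : IntervalIntegrable (fun r => C * (Real.exp (μ * (r - t)) * μ))
      MeasureTheory.volume t s := by
    apply ContinuousOn.intervalIntegrable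
    fun_prop
  have heq1 : ∫ r in t..s, w ⬝ᵥ (M' r).mulVec z =
      w ⬝ᵥ (M s).mulVec z - w ⬝ᵥ (M t).mulVec z := by
    apply intervalIntegral.integral_eq_sub_of_hasDerivAt
    · intro r hr
      rw [huIcc] at hr
      exact bilin_hasDerivAt M M' w z r (hderiv r (hsub hr))
    · exact hint1
  have heq2 : ∫ r in t..s, C * (Real.exp (μ * (r - t)) * μ) =
      C * Real.exp (μ * (s - t)) - C * Real.exp (μ * (t - t)) := by
    apply intervalIntegral.integral_eq_sub_of_hasDerivAt
    · intro r hr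
      have : HasDerivAt (fun r => Real.exp (μ * (r - t))) (Real.exp (μ * (r - t)) * μ) r := by
        have : HasDerivAt (fun r => μ * (r - t)) μ r := by
          simpa using ((hasDerivAt_id r).sub_const t).const_mul μ
        simpa using this.exp
      exact this.const_mul C
    · exact hint2
  have hmono := intervalIntegral.integral_mono_on hts hint1 hint2 hib
  have lhs_eq : w ⬝ᵥ ((M s - M t).mulVec z) =
      w ⬝ᵥ (M s).mulVec z - w ⬝ᵥ (M t).mulVec z := by
    rw [Matrix.sub_mulVec, dotProduct_sub]
  rw [lhs_eq, ← heq1]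
  calc (∫ r in t..s, w ⬝ᵥ (M' r).mulVec z)
      ≤ ∫ r in t..s, C * (Real.exp (μ * (r - t)) * μ) := hmono
    _ = C * Real.exp (μ * (s - t)) - C * Real.exp (μ * (t - t)) := heq2
    _ = (Real.exp (μ * (s - t)) - 1) * Real.sqrt (w ⬝ᵥ (M t).mulVec w)
        * Real.sqrt (z ⬝ᵥ (M t).mulVec z) := by
        rw [hC]; simp; ring
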